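/- Let r ∈ ℕ with r ≥ 2 and p ∈ (0,1). Let N₁ be negative binomial with parameters r+1 and p, and N₂ be negative binomial with parameters r−1 and 1−p, independent. Then the odds estimator ĝ = (r/(N₁−1))·(N₂/(r−1)) is unbiased for the odds: E[ĝ] = p/(1−p). Explicitly, Σ_{n₁≥r+1} Σ_{n₂≥r−1} C(n₁−1, r) p^{r+1} (1−p)^{n₁−r−1} · C(n₂−1, r−2) (1−p)^{r−1} p^{n₂−r+1} · (r/(n₁−1))·(n₂/(r−1)) = p/(1−p). -/

import Mathlib

open scoped BigOperators

/-- Expectation of `f(N)` where `N` is negative binomial with parameters `s` and `q`: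
`E[f(N)] = Σ_{n ≥ s} f(n) C(n−1, s−1) q^s (1−q)^{n−s}`, written with `n = s + k`. -/
noncomputable def negbinExp (s : ℕ) (q : ℝ) (f : ℕ → ℝ) : ℝ :=
  ∑' k : ℕ, ((s + k - 1).choose (s - 1) : ℝ) * q ^ s * (1 - q) ^ k * f (s + k)

/-- Expectation of `f(N₁, N₂)` for independent negative binomials with parameters
`(s₁, q₁)` and `(s₂, q₂)`. -/
noncomputable def negbinExp2 (s₁ : ℕ) (q₁ : ℝ) (s₂ : ℕ) (q₂ : ℝ) (f : ℕ → ℕ → ℝ) : ℝ :=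
  ∑' k₁ : ℕ, ∑' k₂ : ℕ,
    ((s₁ + k₁ - 1).choose (s₁ - 1) : ℝ) * q₁ ^ s₁ * (1 - q₁) ^ k₁ *
      (((s₂ + k₂ - 1).choose (s₂ - 1) : ℝ) * q₂ ^ s₂ * (1 - q₂) ^ k₂) *
      f (s₁ + k₁) (s₂ + k₂)

/-- The m-th harmonic number `H_m = Σ_{k=1}^m 1/k`, `H_0 = 0`. -/
noncomputable def H (m : ℕ) : ℝ := ∑ k ∈ Finset.range m, (1 : ℝ) / (k + 1)

/-- The odds estimator `ĝ = (r/(N₁−1))·(N₂/(r−1))`. -/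
noncomputable def ghat (r : ℕ) (n₁ n₂ : ℕ) : ℝ :=
  ((r : ℝ) / ((n₁ : ℝ) - 1)) * ((n₂ : ℝ) / ((r : ℝ) - 1))

theorem odds_estimator_unbiased (r : ℕ) (hr : 2 ≤ r) (p : ℝ) (hp0 : 0 < p) (hp1 : p < 1) :
    negbinExp2 (r + 1) p (r - 1) (1 - p) (ghat r) = p / (1 - p) := by
  obtain ⟨m, rfl⟩ : ∃ m, r = m + 2 := ⟨r - 2, by omega⟩
  have hq0 : (0:ℝ) < 1 - p := by linarith
  have h1 : ‖(1-p)‖ < 1 := by rw [Real.norm_eq_abs, abs_of_pos hq0]; linarith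
  have h2 : ‖p‖ < 1 := by rw [Real.norm_eq_abs, abs_of_pos hp0]; linarith
  set g : ℕ → ℝ := fun k => ((k + (m+1)).choose (m+1) : ℝ) * p ^ (m+3) * (1-p)^k with hg
  set h : ℕ → ℝ := fun k => ((k + (m+1)).choose (m+1) : ℝ) * (1-p)^(m+1) * p^k with hh
  have Sg : HasSum g p := by
    have h3 := (hasSum_choose_mul_geometric_of_norm_lt_one (𝕜 := ℝ) (m+1) h1).mul_left
      (p^(m+3))
    have e1 : (fun n : ℕ => p^(m+3) * (((n+(m+1)).choose (m+1):ℝ) * (1-p)^n)) = g := by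
      funext k; simp only [hg]; ring
    have e2 : p^(m+3) * (1/(1-(1-p))^(m+1+1)) = p := by
      have hp : (1:ℝ)-(1-p) = p := by ring
      rw [hp]; field_simp; ring
    rwa [e1, e2] at h3
  have Sh : HasSum h (1/(1-p)) := by
    have h3 := (hasSum_choose_mul_geometric_of_norm_lt_one (𝕜 := ℝ) (m+1) h2).mul_left
      ((1-p)^(m+1))
    have e1 : (fun n : ℕ => (1-p)^(m+1) * (((n+(m+1)).choose (m+1):ℝ) * p^n)) = h := by
      funext k; simp only [hh]; ring
    have e2 : (1-p)^(m+1) * (1/(1-p)^(m+1+1)) = 1/(1-p) := by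
      field_simp; ring
    rwa [e1, e2] at h3
  have key : ∀ k₁ k₂ : ℕ,
      ((m+2+1+k₁-1).choose (m+2+1-1) : ℝ) * p^(m+2+1) * (1-p)^k₁ *
        (((m+2-1+k₂-1).choose (m+2-1-1) : ℝ) * (1-p)^(m+2-1) * (1-(1-p))^k₂) *
        ghat (m+2) (m+2+1+k₁) (m+2-1+k₂) = g k₁ * h k₂ := by
    intro k₁ k₂
    have e1 : m+2+1+k₁-1 = m+2+k₁ := by omega
    have e2 : m+2+1-1 = m+2 := by omega
    have e3 : m+2-1+k₂-1 = m+k₂ := by omega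
    have e4 : m+2-1-1 = m := by omega
    have e5 : m+2-1 = m+1 := by omega
    have e6 : (1:ℝ)-(1-p) = p := by ring
    rw [e1, e2, e3, e4, e5, e6]
    unfold ghat
    have A1 : ((m+2+k₁).choose (m+2) : ℝ) * (m+2)
        = ((k₁+(m+1)).choose (m+1) : ℝ) * (m+2+k₁) := by
      have h4 := Nat.add_one_mul_choose_eq (m+1+k₁) (m+1)
      have ea : m+1+k₁+1 = m+2+k₁ := by omega
      have eb : m+1+1 = m+2 := by omega
      have ec : m+1+k₁ = k₁+(m+1) := by omega
      rw [ea, eb, ec, Nat.mul_comm] at h4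
      exact_mod_cast h4.symm
    have A2 : ((m+k₂).choose m : ℝ) * (k₂+(m+1))
        = ((k₂+(m+1)).choose (m+1) : ℝ) * (m+1) := by
      have h4 := Nat.add_one_mul_choose_eq (m+k₂) m
      have ea : m+k₂+1 = k₂+(m+1) := by omega
      rw [ea, Nat.mul_comm] at h4
      exact_mod_cast h4
    simp only [hg, hh]
    have hm0 : (0:ℝ) ≤ (m:ℝ) := Nat.cast_nonneg _
    have hk0 : (0:ℝ) ≤ (k₁:ℝ) := Nat.cast_nonneg _
    have hne1 : ((m+2+1+k₁ : ℕ):ℝ) - 1 ≠ 0 := by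
      push_cast; intro hcon; linarith
    have hne2 : ((m+2 : ℕ):ℝ) - 1 ≠ 0 := by
      push_cast; intro hcon; linarith
    push_cast at hne1 hne2 ⊢
    field_simp
    linear_combination ((((m+k₂).choose m : ℝ))
        * ((m:ℝ)+1+(k₂:ℝ))) * A1
      + ((((k₁+(m+1)).choose (m+1) : ℝ))
        * ((m:ℝ)+2+(k₁:ℝ))) * A2
  rw [negbinExp2]
  rw [tsum_congr fun k₁ => tsum_congr fun k₂ => key k₁ k₂]
  simp only [tsum_mul_left, Sh.tsum_eq]
  rw [tsum_mul_right, Sg.tsum_eq, mul_one_div]
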